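/- For the plumbing graph Γ with adjacency matrix B = [[-1,1,1,1],[1,-2,0,0],[1,0,-3,0],[1,0,0,-8]], the matrix B is negative definite, has determinant of absolute value 2 (so H_1(Y;Z) = Z/2Z for the plumbed manifold Y = S^3_{-2}(trefoil)), has signature σ(B) = -4, and when diagonalized over Z/3Z has trace w(X) such that σ(B) - w(X) ≡ 2 mod 4; hence the mod 3 Witt invariant of Y is w(Y) = 2 mod 4. -/

import Mathlib

open Matrix

/-- The adjacency matrix of the plumbing graph of `Y = S³₋₂(3ʳ₁)`. -/
def Btref2 : Matrix (Fin 4) (Fin 4) ℤ :=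
  !![-1, 1, 1, 1;
      1, -2, 0, 0;
      1, 0, -3, 0;
      1, 0, 0, -8]

/-- `B` is negative definite, `|det B| = 2` (so `H₁(Y;ℤ) = ℤ/2`), its signature is
`σ(B) = -4` (witnessed by a real diagonalization with negative entries), and there is a
diagonalization of `B` over `ℤ/3ℤ` with diagonal entries in `{0, ±1}` whose trace
`w(X)` satisfies `σ(B) - w(X) ≡ 2 mod 4`; hence the mod 3 Witt invariant of `Y` is
`w(Y) = 2 mod 4`. -/
theorem witt_invariant_S3_minus2_trefoil :
    (∀ x : Fin 4 → ℚ, x ≠ 0 → x ⬝ᵥ (Btref2.map (Int.cast : ℤ → ℚ)).mulVec x < 0) ∧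
    Btref2.det.natAbs = 2 ∧
    (∃ P : Matrix (Fin 4) (Fin 4) ℝ, IsUnit P.det ∧ ∃ d : Fin 4 → ℝ,
      P.transpose * Btref2.map (Int.cast : ℤ → ℝ) * P = Matrix.diagonal d ∧
      ∀ i, d i < 0) ∧
    (∃ P : Matrix (Fin 4) (Fin 4) (ZMod 3), IsUnit P.det ∧ ∃ d : Fin 4 → ℤ,
      (∀ i, d i = 0 ∨ d i = 1 ∨ d i = -1) ∧
      P.transpose * Btref2.map (Int.cast : ℤ → ZMod 3) * P =
        Matrix.diagonal (fun i => (d i : ZMod 3)) ∧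
      (-4 - ∑ i, d i) % 4 = 2) := by
  refine ⟨?_, ?_, ?_, ?_⟩
  · intro x hx
    obtain ⟨i, hi⟩ := Function.ne_iff.mp hx
    have h0 : x ⬝ᵥ (Btref2.map (Int.cast : ℤ → ℚ)).mulVec x =
        -((x 0 - x 1 - x 2 - x 3)^2 + (x 1 - x 2 - x 3)^2 + (x 2 - 2*x 3)^2
          + 2*(x 3)^2) := by
      simp [Btref2, dotProduct, mulVec, Fin.sum_univ_four, Matrix.vecHead, Matrix.vecTail]
      ring
    rw [h0]
    by_contra hcon
    push_neg at hcon
    have ha : (x 0 - x 1 - x 2 - x 3) ^ 2 = 0 := le_antisymm (by nlinarith [sq_nonneg (x 1 - x 2 - x 3), sq_nonneg (x 2 - 2*x 3), sq_nonneg (x 3)]) (sq_nonneg _)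
    have hb : (x 1 - x 2 - x 3) ^ 2 = 0 := le_antisymm (by nlinarith [sq_nonneg (x 0 - x 1 - x 2 - x 3), sq_nonneg (x 2 - 2*x 3), sq_nonneg (x 3)]) (sq_nonneg _)
    have hc : (x 2 - 2*x 3) ^ 2 = 0 := le_antisymm (by nlinarith [sq_nonneg (x 0 - x 1 - x 2 - x 3), sq_nonneg (x 1 - x 2 - x 3), sq_nonneg (x 3)]) (sq_nonneg _)
    have hd : (x 3) ^ 2 = 0 := le_antisymm (by nlinarith [sq_nonneg (x 0 - x 1 - x 2 - x 3), sq_nonneg (x 1 - x 2 - x 3), sq_nonneg (x 2 - 2*x 3)]) (sq_nonneg _)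
    rw [pow_eq_zero_iff two_ne_zero] at ha hb hc hd
    refine hx (funext fun j => ?_)
    fin_cases j <;> simp <;> linarith
  · decide
  · refine ⟨!![1,1,2,6; 0,1,1,3; 0,0,1,2; 0,0,0,1], ?_, ![-1,-1,-1,-2], ?_, ?_⟩
    · have : (!![1,1,2,6; 0,1,1,3; 0,0,1,2; 0,0,0,1] : Matrix (Fin 4) (Fin 4) ℝ).det = 1 := by
        simp [Matrix.det_succ_row_zero, Fin.sum_univ_succ, Fin.succAbove]
      rw [this]; exact isUnit_one
    · ext i j
      fin_cases i <;> fin_cases j <;>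
        simp [Btref2, Matrix.mul_apply, Fin.sum_univ_four, Matrix.diagonal,
          Matrix.vecHead, Matrix.vecTail] <;> norm_num
    · intro i; fin_cases i <;> norm_num
  · refine ⟨!![1,1,2,0; 0,1,1,0; 0,0,1,2; 0,0,0,1], ?_, ![-1,-1,-1,1], ?_, ?_, ?_⟩
    · decide
    · intro i; fin_cases i <;> simp
    · decide
    · decide
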